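/- Lower bound for differentially private multi-item auctions: let n ≥ 2, and let M be a mechanism that, for every valuation matrix v with entries v_{ij} ∈ [0,1] (the value of agent i for item j, with n unit-demand agents and n items), outputs a probability distribution M(v) over permutations π of {1,…,n}. Suppose (i) M is ε-differentially private: for any two valuation matrices v, v' with entries in [0,1] that differ only in the row of one agent, and every permutation π, Pr[M(v) = π] ≤ exp(ε)·Pr[M(v') = π]; and (ii) M achieves expected social welfare at least opt(v) − n/10 on every valuation matrix v with entries in [0,1], where opt(v) = max_π ∑_{i=1}^n v_{i,π(i)} and the expected welfare is E_{π ∼ M(v)}[∑_i v_{i,π(i)}]. Then exp(ε) ≥ n − 1. -/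

import Mathlib

open scoped Classical
open Finset

section AuxMultiItem

variable {n : ℕ}

/-- The 0/1 valuation matrix in which agent `i` values only item `f i`. -/
private def vmat (f : Fin n → Fin n) : Fin n → Fin n → ℝ :=
  fun i j => if f i = j then 1 else 0

private lemma vmat_mem (f : Fin n → Fin n) : ∀ i j, vmat f i j ∈ Set.Icc (0 : ℝ) 1 := by
  intro i j
  unfold vmat
  split_ifs <;> norm_num

/-- There is a permutation matching each item in the image of `f` to an agent who wants it,
hence the optimum welfare of `vmat f` is at least `|im f|`. -/
private lemma exists_good_perm (hn : 0 < n) (f : Fin n → Fin n) :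
    ∃ π : Equiv.Perm (Fin n), ((Finset.univ.image f).card : ℝ) ≤ ∑ i, vmat f i (π i) := by
  classical
  set S : Finset (Fin n) := Finset.univ.image f with hS
  have hpre : ∀ j ∈ S, ∃ a, f a = j := by
    intro j hj
    rcases Finset.mem_image.mp hj with ⟨a, _, ha⟩
    exact ⟨a, ha⟩
  let g : Fin n → Fin n := fun j => if h : ∃ a, f a = j then h.choose else ⟨0, hn⟩
  have hgf : ∀ j ∈ S, f (g j) = j := by
    intro j hj
    rcases hpre j hj with ⟨a, ha⟩
    have h : ∃ a, f a = j := ⟨a, ha⟩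
    simp only [g, dif_pos h]
    exact h.choose_spec
  set T : Finset (Fin n) := S.image g with hT
  have hmemT : ∀ x ∈ T, f x ∈ S ∧ g (f x) = x := by
    intro x hx
    rcases Finset.mem_image.mp hx with ⟨j, hj, rfl⟩
    rw [hgf j hj]
    exact ⟨hj, rfl⟩
  let e₁ : {x // x ∈ T} ≃ {y // y ∈ S} :=
  { toFun := fun x => ⟨f x.1, (hmemT x.1 x.2).1⟩
    invFun := fun y => ⟨g y.1, Finset.mem_image_of_mem g y.2⟩
    left_inv := by
      rintro ⟨x, hx⟩
      exact Subtype.ext (hmemT x hx).2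
    right_inv := by
      rintro ⟨y, hy⟩
      exact Subtype.ext (hgf y hy) }
  have hcardT : T.card = S.card := by
    apply Finset.card_image_of_injOn
    intro j₁ h₁ j₂ h₂ hgj
    rw [← hgf j₁ h₁, ← hgf j₂ h₂, hgj]
  have hcard2 : Fintype.card {x // ¬ x ∈ T} = Fintype.card {y // ¬ y ∈ S} := by
    rw [Fintype.card_subtype_compl, Fintype.card_subtype_compl]
    congr 1
    rw [Fintype.card_coe, Fintype.card_coe, hcardT]
  let e₂ : {x // ¬ x ∈ T} ≃ {y // ¬ y ∈ S} := Fintype.equivOfCardEq hcard2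
  let π : Equiv.Perm (Fin n) :=
    ((Equiv.sumCompl (fun x => x ∈ T)).symm.trans
      ((e₁.sumCongr e₂).trans (Equiv.sumCompl (fun y => y ∈ S))))
  have hπ : ∀ x, ∀ hx : x ∈ T, π x = f x := by
    intro x hx
    show (Equiv.sumCompl (fun y => y ∈ S))
        ((e₁.sumCongr e₂) ((Equiv.sumCompl (fun x => x ∈ T)).symm x)) = f x
    rw [Equiv.sumCompl_symm_apply_of_pos hx]
    rfl
  refine ⟨π, ?_⟩
  have h1 : ∀ i ∈ T, (1 : ℝ) ≤ vmat f i (π i) := by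
    intro i hi
    unfold vmat
    rw [hπ i hi]
    simp
  calc ((S.card : ℝ)) = (T.card : ℝ) := by rw [hcardT]
    _ = ∑ _i ∈ T, (1 : ℝ) := by simp
    _ ≤ ∑ i ∈ T, vmat f i (π i) := Finset.sum_le_sum h1
    _ ≤ ∑ i, vmat f i (π i) := by
        apply Finset.sum_le_sum_of_subset_of_nonneg (Finset.subset_univ T)
        intro i _ _
        unfold vmat
        split_ifs <;> norm_num

/-- The number of functions avoiding a given value `j`. -/
private lemma count_avoid (j : Fin n) :
    (Finset.univ.filter (fun f : Fin n → Fin n => ¬ j ∈ Finset.univ.image f)).card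
      = (n - 1) ^ n := by
  classical
  rw [← Fintype.card_subtype]
  have e : {f : Fin n → Fin n // ¬ j ∈ Finset.univ.image f} ≃ (Fin n → {x : Fin n // x ≠ j}) := by
    refine Equiv.trans (Equiv.subtypeEquivRight (q := fun f => ∀ i, f i ≠ j) ?_) ?_
    · intro f
      simp [Finset.mem_image]
    · exact
      { toFun := fun F i => ⟨F.1 i, F.2 i⟩
        invFun := fun h => ⟨fun i => (h i).1, fun i => (h i).2⟩
        left_inv := fun F => rfl
        right_inv := fun h => rfl }
  rw [Fintype.card_congr e, Fintype.card_fun]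
  congr 1
  · rw [Fintype.card_subtype_compl, Fintype.card_subtype_eq, Fintype.card_fin]
  · exact Fintype.card_fin n

/-- Key reindexing identity: summing `G (update f k j)` over all `f` and all `j ≠ f k`
counts every function exactly `n - 1` times. -/
private lemma sum_update_erase (k : Fin n) (G : (Fin n → Fin n) → ℝ) :
    ∑ f : Fin n → Fin n, ∑ j ∈ Finset.univ.erase (f k), G (Function.update f k j)
      = ((n : ℝ) - 1) * ∑ f : Fin n → Fin n, G f := by
  classical
  have h1 : ∑ f : Fin n → Fin n, ∑ j : Fin n, G (Function.update f k j)
      = (n : ℝ) * ∑ f : Fin n → Fin n, G f := by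
    have h2 : ∑ p ∈ (Finset.univ ×ˢ Finset.univ :
          Finset ((Fin n → Fin n) × Fin n)), G (Function.update p.1 k p.2)
        = ∑ p ∈ (Finset.univ ×ˢ Finset.univ :
          Finset ((Fin n → Fin n) × Fin n)), G p.1 := by
      refine Finset.sum_nbij' (fun p => (Function.update p.1 k p.2, p.1 k))
        (fun p => (Function.update p.1 k p.2, p.1 k)) ?_ ?_ ?_ ?_ ?_
      · intro a _; exact Finset.mem_product.mpr ⟨Finset.mem_univ _, Finset.mem_univ _⟩
      · intro a _; exact Finset.mem_product.mpr ⟨Finset.mem_univ _, Finset.mem_univ _⟩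
      · intro a _
        ext : 1
        · simp [Function.update_idem, Function.update_eq_self]
        · simp [Function.update_self]
      · intro a _
        ext : 1
        · simp [Function.update_idem, Function.update_eq_self]
        · simp [Function.update_self]
      · intro a _; rfl
    have hL := Finset.sum_product (Finset.univ) (Finset.univ)
      (fun p : (Fin n → Fin n) × Fin n => G (Function.update p.1 k p.2))
    have hR := Finset.sum_product (Finset.univ) (Finset.univ)
      (fun p : (Fin n → Fin n) × Fin n => G p.1)
    rw [← hL, h2, hR]
    simp only [Finset.sum_const, Finset.card_univ, Fintype.card_fin, nsmul_eq_mul]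
    rw [← Finset.mul_sum]
  have h3 : ∀ f : Fin n → Fin n, ∑ j ∈ Finset.univ.erase (f k), G (Function.update f k j)
      = (∑ j : Fin n, G (Function.update f k j)) - G f := by
    intro f
    rw [Finset.sum_erase_eq_sub (Finset.mem_univ (f k))]
    rw [Function.update_eq_self]
  rw [Finset.sum_congr rfl (fun f _ => h3 f), Finset.sum_sub_distrib, h1]
  ring

/-- `(1 - 1/n)^n ≤ 2/5` for all `n`, since it is at most `1/e`. -/
private lemma pow_bound (hn : 2 ≤ n) : ((n : ℝ) - 1) ^ n ≤ (2 / 5) * (n : ℝ) ^ n := by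
  have hn0 : (0 : ℝ) < n := by
    have : (2 : ℝ) ≤ n := by exact_mod_cast hn
    linarith
  have key : ((n : ℝ) - 1) ^ n ≤ Real.exp (-1) * (n : ℝ) ^ n := by
    have h1 : (n : ℝ) - 1 ≤ Real.exp (-(1 / (n : ℝ))) * n := by
      have := Real.add_one_le_exp (-(1 / (n : ℝ)))
      have h2 : (-(1 / (n : ℝ)) + 1) * n ≤ Real.exp (-(1 / (n : ℝ))) * n :=
        mul_le_mul_of_nonneg_right this (le_of_lt hn0)
      have h3 : (-(1 / (n : ℝ)) + 1) * n = (n : ℝ) - 1 := by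
        field_simp
        linarith
      linarith
    have h4 : ((n : ℝ) - 1) ^ n ≤ (Real.exp (-(1 / (n : ℝ))) * n) ^ n := by
      apply pow_le_pow_left₀ _ h1
      have : (1 : ℝ) ≤ n := by
        have : (2 : ℝ) ≤ n := by exact_mod_cast hn
        linarith
      linarith
    have h5 : (Real.exp (-(1 / (n : ℝ))) * n) ^ n
        = Real.exp (-(1 / (n : ℝ))) ^ n * (n : ℝ) ^ n := mul_pow _ _ _
    have h6 : Real.exp (-(1 / (n : ℝ))) ^ n = Real.exp (-1) := by
      rw [← Real.exp_nat_mul]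
      congr 1
      field_simp
    calc ((n : ℝ) - 1) ^ n ≤ (Real.exp (-(1 / (n : ℝ))) * n) ^ n := h4
      _ = Real.exp (-(1 / (n : ℝ))) ^ n * (n : ℝ) ^ n := h5
      _ = Real.exp (-1) * (n : ℝ) ^ n := by rw [h6]
  have hexp : Real.exp (-1) ≤ 2 / 5 := by
    rw [Real.exp_neg]
    rw [inv_le_comm₀ (Real.exp_pos 1) (by norm_num)]
    have := Real.exp_one_gt_d9
    linarith
  calc ((n : ℝ) - 1) ^ n ≤ Real.exp (-1) * (n : ℝ) ^ n := key
    _ ≤ (2 / 5) * (n : ℝ) ^ n := by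
        apply mul_le_mul_of_nonneg_right hexp
        positivity


/-- The probability (under `M` on instance `vmat f`) that agent `k` receives item `j`. -/
private noncomputable def Pm (M : (Fin n → Fin n → ℝ) → Equiv.Perm (Fin n) → ℝ)
    (f : Fin n → Fin n) (k j : Fin n) : ℝ :=
  ∑ π : Equiv.Perm (Fin n), M (vmat f) π * (if π k = j then 1 else 0)

private lemma Pm_sum_one (M : (Fin n → Fin n → ℝ) → Equiv.Perm (Fin n) → ℝ)
    (f : Fin n → Fin n) (k : Fin n)
    (h : ∑ π : Equiv.Perm (Fin n), M (vmat f) π = 1) :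
    ∑ j : Fin n, Pm M f k j = 1 := by
  unfold Pm
  rw [Finset.sum_comm]
  have h1 : ∀ π : Equiv.Perm (Fin n),
      ∑ j : Fin n, M (vmat f) π * (if π k = j then (1 : ℝ) else 0) = M (vmat f) π := by
    intro π
    rw [← Finset.mul_sum]
    simp
  rw [Finset.sum_congr rfl fun π _ => h1 π, h]

private lemma W_eq (M : (Fin n → Fin n → ℝ) → Equiv.Perm (Fin n) → ℝ) (f : Fin n → Fin n) :
    (∑ π : Equiv.Perm (Fin n), M (vmat f) π * ∑ i, vmat f i (π i))
      = ∑ k : Fin n, Pm M f k (f k) := by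
  unfold Pm
  rw [Finset.sum_comm]
  apply Finset.sum_congr rfl
  intro π _
  rw [← Finset.mul_sum]
  congr 1
  apply Finset.sum_congr rfl
  intro i _
  unfold vmat
  exact if_congr eq_comm rfl rfl

private lemma Pm_dp {ε : ℝ} (M : (Fin n → Fin n → ℝ) → Equiv.Perm (Fin n) → ℝ)
    (f : Fin n → Fin n) (k j : Fin n)
    (h : ∀ π, M (vmat (Function.update f k j)) π ≤ Real.exp ε * M (vmat f) π) :
    Pm M (Function.update f k j) k j ≤ Real.exp ε * Pm M f k j := by
  unfold Pm
  rw [Finset.mul_sum]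
  apply Finset.sum_le_sum
  intro π _
  have hite : (0 : ℝ) ≤ (if π k = j then (1 : ℝ) else 0) := by split_ifs <;> norm_num
  calc M (vmat (Function.update f k j)) π * (if π k = j then (1 : ℝ) else 0)
      ≤ (Real.exp ε * M (vmat f) π) * (if π k = j then (1 : ℝ) else 0) :=
        mul_le_mul_of_nonneg_right (h π) hite
    _ = Real.exp ε * (M (vmat f) π * (if π k = j then (1 : ℝ) else 0)) := by ring

private lemma sum_card_image (hn : 0 < n) :
    ∑ f : Fin n → Fin n, ((Finset.univ.image f).card : ℝ)
      = (n : ℝ) * ((n : ℝ) ^ n - ((n : ℝ) - 1) ^ n) := by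
  classical
  have h1 : ∀ f : Fin n → Fin n, ((Finset.univ.image f).card : ℝ)
      = ∑ j : Fin n, (if j ∈ Finset.univ.image f then (1 : ℝ) else 0) := by
    intro f
    rw [Finset.sum_ite_mem, Finset.univ_inter]
    simp
  rw [Finset.sum_congr rfl fun f _ => h1 f, Finset.sum_comm]
  have h2 : ∀ j : Fin n, ∑ f : Fin n → Fin n,
      (if j ∈ Finset.univ.image f then (1 : ℝ) else 0)
      = (n : ℝ) ^ n - ((n : ℝ) - 1) ^ n := by
    intro j
    rw [Finset.sum_boole]
    have hsplit := Finset.card_filter_add_card_filter_not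
      (s := (Finset.univ : Finset (Fin n → Fin n))) (fun f => j ∈ Finset.univ.image f)
    rw [count_avoid j] at hsplit
    have hcard : (Finset.univ : Finset (Fin n → Fin n)).card = n ^ n := by
      rw [Finset.card_univ, Fintype.card_fun, Fintype.card_fin]
    rw [hcard] at hsplit
    have hle : (n - 1) ^ n ≤ n ^ n := Nat.pow_le_pow_left (Nat.sub_le n 1) n
    have hfc : (Finset.univ.filter (fun f : Fin n → Fin n => j ∈ Finset.univ.image f)).card
        = n ^ n - (n - 1) ^ n := by omega
    rw [hfc]
    have hcast : (((n - 1) ^ n : ℕ) : ℝ) = ((n : ℝ) - 1) ^ n := by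
      rw [Nat.cast_pow, Nat.cast_pred hn]
    rw [Nat.cast_sub hle, Nat.cast_pow, hcast]
  rw [Finset.sum_congr rfl fun j _ => h2 j]
  rw [Finset.sum_const, Finset.card_univ, Fintype.card_fin, nsmul_eq_mul]

end AuxMultiItem

/-- Lower bound for differentially private multi-item auctions: any (not necessarily
truthful) randomized allocation rule `M` over perfect matchings (permutations) of `n`
unit-demand agents to `n` items that is `ε`-differentially private and always achieves
expected social welfare at least `opt(v) − n/10` must satisfy `exp(ε) ≥ n − 1`. -/
theorem multiItem_lower_bound (n : ℕ) (hn : 2 ≤ n) (ε : ℝ)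
    (M : (Fin n → Fin n → ℝ) → Equiv.Perm (Fin n) → ℝ)
    (hprob : ∀ v : Fin n → Fin n → ℝ, (∀ i j, v i j ∈ Set.Icc (0 : ℝ) 1) →
      (∀ π : Equiv.Perm (Fin n), 0 ≤ M v π) ∧ (∑ π : Equiv.Perm (Fin n), M v π = 1))
    (hdp : ∀ v v' : Fin n → Fin n → ℝ, (∀ i j, v i j ∈ Set.Icc (0 : ℝ) 1) →
      (∀ i j, v' i j ∈ Set.Icc (0 : ℝ) 1) →
      (∃ i : Fin n, ∀ k : Fin n, k ≠ i → v k = v' k) →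
      ∀ π : Equiv.Perm (Fin n), M v π ≤ Real.exp ε * M v' π)
    (hwelfare : ∀ v : Fin n → Fin n → ℝ, (∀ i j, v i j ∈ Set.Icc (0 : ℝ) 1) →
      (∑ π : Equiv.Perm (Fin n), M v π * ∑ i, v i (π i))
        ≥ (Finset.univ.sup' Finset.univ_nonempty
            (fun π : Equiv.Perm (Fin n) => ∑ i, v i (π i))) - n / 10) :
    Real.exp ε ≥ n - 1 := by
  classical
  have hn0 : 0 < n := by omega
  have hnR : (2 : ℝ) ≤ (n : ℝ) := by exact_mod_cast hn
  have hnpos : (0 : ℝ) < (n : ℝ) := by linarith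
  set A : ℝ := ∑ f : Fin n → Fin n, ∑ k : Fin n, Pm M f k (f k) with hA
  have hsum1 : ∀ f : Fin n → Fin n, ∑ π : Equiv.Perm (Fin n), M (vmat f) π = 1 :=
    fun f => (hprob (vmat f) (vmat_mem f)).2
  have hdp' : ∀ (f : Fin n → Fin n) (k j : Fin n) (π : Equiv.Perm (Fin n)),
      M (vmat (Function.update f k j)) π ≤ Real.exp ε * M (vmat f) π := by
    intro f k j π
    refine hdp _ _ (vmat_mem _) (vmat_mem f) ⟨k, fun l hl => ?_⟩ π
    funext j'
    unfold vmat
    rw [Function.update_of_ne hl]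
  have hswap : ∑ k : Fin n, ∑ f : Fin n → Fin n, Pm M f k (f k)
      = ∑ f : Fin n → Fin n, ∑ k : Fin n, Pm M f k (f k) := Finset.sum_comm
  -- The main double-counting inequality
  have main : ((n : ℝ) - 1) * A ≤ Real.exp ε * ((n : ℝ) * ((n : ℝ) ^ n) - A) := by
    have lhs_eq : ∑ k : Fin n, ∑ f : Fin n → Fin n,
        ∑ j ∈ Finset.univ.erase (f k), Pm M (Function.update f k j) k j
        = ((n : ℝ) - 1) * A := by
      have hk : ∀ k : Fin n, ∑ f : Fin n → Fin n,
          ∑ j ∈ Finset.univ.erase (f k), Pm M (Function.update f k j) k j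
          = ((n : ℝ) - 1) * ∑ f : Fin n → Fin n, Pm M f k (f k) := by
        intro k
        have h := sum_update_erase k (fun g => Pm M g k (g k))
        rw [← h]
        apply Finset.sum_congr rfl
        intro f _
        apply Finset.sum_congr rfl
        intro j _
        congr 1
        exact (Function.update_self k j f).symm
      rw [Finset.sum_congr rfl fun k _ => hk k, ← Finset.mul_sum, hswap, ← hA]
    have rhs_eq : ∑ k : Fin n, ∑ f : Fin n → Fin n,
        ∑ j ∈ Finset.univ.erase (f k), Pm M f k j
        = (n : ℝ) * ((n : ℝ) ^ n) - A := by
      have hk : ∀ (f : Fin n → Fin n) (k : Fin n),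
          ∑ j ∈ Finset.univ.erase (f k), Pm M f k j = 1 - Pm M f k (f k) := by
        intro f k
        rw [Finset.sum_erase_eq_sub (Finset.mem_univ (f k)), Pm_sum_one M f k (hsum1 f)]
      calc ∑ k : Fin n, ∑ f : Fin n → Fin n, ∑ j ∈ Finset.univ.erase (f k), Pm M f k j
          = ∑ k : Fin n, ∑ f : Fin n → Fin n, (1 - Pm M f k (f k)) := by
            apply Finset.sum_congr rfl; intro k _
            exact Finset.sum_congr rfl fun f _ => hk f k
        _ = ∑ k : Fin n, ((n : ℝ) ^ n - ∑ f : Fin n → Fin n, Pm M f k (f k)) := by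
            apply Finset.sum_congr rfl; intro k _
            rw [Finset.sum_sub_distrib, Finset.sum_const, Finset.card_univ, Fintype.card_fun,
              Fintype.card_fin, nsmul_eq_mul, mul_one, Nat.cast_pow]
        _ = (n : ℝ) * ((n : ℝ) ^ n) - A := by
            rw [Finset.sum_sub_distrib, Finset.sum_const, Finset.card_univ, Fintype.card_fin,
              nsmul_eq_mul, hswap, ← hA]
    have step : ∑ k : Fin n, ∑ f : Fin n → Fin n,
        ∑ j ∈ Finset.univ.erase (f k), Pm M (Function.update f k j) k j
        ≤ Real.exp ε * (∑ k : Fin n, ∑ f : Fin n → Fin n,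
            ∑ j ∈ Finset.univ.erase (f k), Pm M f k j) := by
      rw [Finset.mul_sum]
      apply Finset.sum_le_sum; intro k _
      rw [Finset.mul_sum]
      apply Finset.sum_le_sum; intro f _
      rw [Finset.mul_sum]
      apply Finset.sum_le_sum; intro j _
      exact Pm_dp M f k j (fun π => hdp' f k j π)
    rw [lhs_eq, rhs_eq] at step
    exact step
  -- Lower bound on A from the welfare guarantee
  have hAlow : (1 / 2) * ((n : ℝ) * (n : ℝ) ^ n) ≤ A := by
    have h1 : ∀ f : Fin n → Fin n,
        ((Finset.univ.image f).card : ℝ) - (n : ℝ) / 10 ≤ ∑ k : Fin n, Pm M f k (f k) := by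
      intro f
      have hw := hwelfare (vmat f) (vmat_mem f)
      rw [W_eq M f] at hw
      obtain ⟨π₀, hπ₀⟩ := exists_good_perm hn0 f
      have hsup : ((Finset.univ.image f).card : ℝ) ≤
          Finset.univ.sup' Finset.univ_nonempty
            (fun π : Equiv.Perm (Fin n) => ∑ i, vmat f i (π i)) :=
        le_trans hπ₀ (Finset.le_sup' (fun π : Equiv.Perm (Fin n) => ∑ i, vmat f i (π i)) (Finset.mem_univ π₀))
      linarith [hw, hsup]
    have h2 : ∑ f : Fin n → Fin n, (((Finset.univ.image f).card : ℝ) - (n : ℝ) / 10) ≤ A := by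
      rw [hA]
      exact Finset.sum_le_sum fun f _ => h1 f
    have h3 : ∑ f : Fin n → Fin n, (((Finset.univ.image f).card : ℝ) - (n : ℝ) / 10)
        = (n : ℝ) * ((n : ℝ) ^ n - ((n : ℝ) - 1) ^ n) - (n : ℝ) ^ n * ((n : ℝ) / 10) := by
      rw [Finset.sum_sub_distrib, sum_card_image hn0, Finset.sum_const, Finset.card_univ,
        Fintype.card_fun, Fintype.card_fin, nsmul_eq_mul, Nat.cast_pow]
    have hpow := pow_bound hn
    have hX : (n : ℝ) * ((n : ℝ) - 1) ^ n ≤ (n : ℝ) * ((2 / 5) * (n : ℝ) ^ n) :=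
      mul_le_mul_of_nonneg_left hpow (by linarith)
    nlinarith [h2, h3, hX]
  -- Conclusion
  have hK : (0 : ℝ) < (n : ℝ) * (n : ℝ) ^ n := mul_pos hnpos (pow_pos hnpos n)
  have hA0 : 0 < A := lt_of_lt_of_le (by linarith) hAlow
  have h2A : (n : ℝ) * (n : ℝ) ^ n - A ≤ A := by linarith
  have hfin : ((n : ℝ) - 1) * A ≤ Real.exp ε * A :=
    le_trans main (mul_le_mul_of_nonneg_left h2A (Real.exp_nonneg ε))
  have hlast := (mul_le_mul_iff_of_pos_right hA0).mp hfin
  linarith [hlast]
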